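/- Let α > 0, a > 0 and κ > 0. The following are equivalent: (i) there exists a nonzero bounded continuous function ψ : [0, ∞) → ℝ with ψ(0) = 0 which is twice differentiable at every x ∈ (0, ∞) with x ≠ a, satisfies ψ''(x) = κ²ψ(x) there, whose derivative has one-sided limits ψ'(a+0) and ψ'(a−0) at a, and which satisfies ψ'(a+0) − ψ'(a−0) = −αψ(a); (ii) αa > 1 and (α/2)·exp(−2κa) = α/2 − κ (so that necessarily κ ∈ (0, α/2)). -/

import Mathlib

open Filter Topology

lemma hd_piece {ψ f f' f'' : ℝ → ℝ} {s : Set ℝ} (hs : IsOpen s)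
    (heq : ∀ y ∈ s, ψ y = f y)
    (h1 : ∀ y, HasDerivAt f (f' y) y) (h2 : ∀ y, HasDerivAt f' (f'' y) y) :
    ∀ x ∈ s, DifferentiableAt ℝ ψ x ∧ DifferentiableAt ℝ (deriv ψ) x ∧
      deriv (deriv ψ) x = f'' x ∧ deriv ψ x = f' x := by
  have hder : ∀ x ∈ s, deriv ψ x = f' x := by
    intro x hx
    have hev : ψ =ᶠ[𝓝 x] f := by
      filter_upwards [hs.mem_nhds hx] with y hy using heq y hy
    rw [hev.deriv_eq, (h1 x).deriv]
  intro x hx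
  have hev : ψ =ᶠ[𝓝 x] f := by
    filter_upwards [hs.mem_nhds hx] with y hy using heq y hy
  have hev' : deriv ψ =ᶠ[𝓝 x] f' := by
    filter_upwards [hs.mem_nhds hx] with y hy using hder y hy
  refine ⟨hev.differentiableAt_iff.mpr (h1 x).differentiableAt,
    hev'.differentiableAt_iff.mpr (h2 x).differentiableAt, ?_, hder x hx⟩
  rw [hev'.deriv_eq, (h2 x).deriv]

lemma ode_solution {κ : ℝ} (hκ : 0 < κ) {ψ : ℝ → ℝ} {s : Set ℝ} (hs : IsOpen s)
    (hc : Convex ℝ s)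
    (h : ∀ x ∈ s, DifferentiableAt ℝ ψ x ∧ DifferentiableAt ℝ (deriv ψ) x ∧
      deriv (deriv ψ) x = κ ^ 2 * ψ x) :
    ∃ c₁ c₂ : ℝ, ∀ x ∈ s,
      ψ x = c₁ * Real.exp (κ * x) + c₂ * Real.exp (-(κ * x)) ∧
      deriv ψ x = κ * c₁ * Real.exp (κ * x) - κ * c₂ * Real.exp (-(κ * x)) := by
  rcases s.eq_empty_or_nonempty with rfl | ⟨x₀, hx₀⟩
  · exact ⟨0, 0, by simp⟩
  set u := fun x => Real.exp (-(κ * x)) * (deriv ψ x + κ * ψ x) with hu_def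
  set v := fun x => Real.exp (κ * x) * (deriv ψ x - κ * ψ x) with hv_def
  have hexp1 : ∀ y : ℝ, HasDerivAt (fun x => Real.exp (κ * x)) (κ * Real.exp (κ * y)) y := by
    intro y
    have := (((hasDerivAt_id y).const_mul κ)).exp
    simp only [id_eq] at this
    convert this using 1; ring
  have hexp2 : ∀ y : ℝ, HasDerivAt (fun x => Real.exp (-(κ * x))) (-κ * Real.exp (-(κ * y))) y := by
    intro y
    have := (((hasDerivAt_id y).const_mul κ).neg).exp
    simp only [id_eq, Pi.neg_apply] at this
    convert this using 1; ring
  have hu : ∀ x ∈ s, HasDerivAt u 0 x := by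
    intro x hx
    have hψ : HasDerivAt ψ (deriv ψ x) x := (h x hx).1.hasDerivAt
    have hψ' : HasDerivAt (deriv ψ) (κ ^ 2 * ψ x) x := by
      rw [← (h x hx).2.2]; exact (h x hx).2.1.hasDerivAt
    have h0 := (hexp2 x).mul (hψ'.add (hψ.const_mul κ))
    exact h0.congr_deriv (by simp only [Pi.add_apply]; ring)
  have hv : ∀ x ∈ s, HasDerivAt v 0 x := by
    intro x hx
    have hψ : HasDerivAt ψ (deriv ψ x) x := (h x hx).1.hasDerivAt
    have hψ' : HasDerivAt (deriv ψ) (κ ^ 2 * ψ x) x := by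
      rw [← (h x hx).2.2]; exact (h x hx).2.1.hasDerivAt
    have h0 := (hexp1 x).mul (hψ'.sub (hψ.const_mul κ))
    exact h0.congr_deriv (by simp only [Pi.sub_apply]; ring)
  have hconst : ∀ (f : ℝ → ℝ), (∀ x ∈ s, HasDerivAt f 0 x) → ∀ x ∈ s, f x = f x₀ := by
    intro f hf x hx
    refine hc.is_const_of_fderivWithin_eq_zero
      (fun y hy => ((hf y hy).differentiableAt).differentiableWithinAt) ?_ hx hx₀
    intro y hy
    have h0 : (ContinuousLinearMap.smulRight (1 : ℝ →L[ℝ] ℝ) (0 : ℝ)) = 0 := by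
      ext; simp
    have : HasFDerivWithinAt f (0 : ℝ →L[ℝ] ℝ) s y := by
      have := (hf y hy).hasFDerivAt.hasFDerivWithinAt (s := s)
      rwa [ContinuousLinearMap.toSpanSingleton_zero] at this
    exact this.fderivWithin (hs.uniqueDiffWithinAt hy)
  refine ⟨u x₀ / (2 * κ), -(v x₀) / (2 * κ), ?_⟩
  intro x hx
  have hU := hconst u hu x hx
  have hV := hconst v hv x hx
  have hE : Real.exp (κ * x) * Real.exp (-(κ * x)) = 1 := by
    rw [← Real.exp_add]; simp
  simp only [hu_def, hv_def] at hU hV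
  have hκ' : (2 : ℝ) * κ ≠ 0 := by positivity
  have e1 : deriv ψ x + κ * ψ x =
      (Real.exp (-(κ * x₀)) * (deriv ψ x₀ + κ * ψ x₀)) * Real.exp (κ * x) := by
    linear_combination Real.exp (κ * x) * hU - (deriv ψ x + κ * ψ x) * hE
  have e2 : deriv ψ x - κ * ψ x =
      (Real.exp (κ * x₀) * (deriv ψ x₀ - κ * ψ x₀)) * Real.exp (-(κ * x)) := by
    linear_combination Real.exp (-(κ * x)) * hV - (deriv ψ x - κ * ψ x) * hE
  constructor
  · field_simp
    linear_combination e1 - e2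
  · field_simp
    linear_combination e1 + e2

set_option maxHeartbeats 1000000 in
/-- the half-line Schrödinger operator with Dirichlet condition
at `0` and one attractive delta interaction of strength `α` at `a` has `−κ²`
as an eigenvalue if and only if `αa > 1` and `(α/2)·exp(−2κa) = α/2 − κ`. -/
theorem halfline_delta_eigenvalue
    (α a κ : ℝ) (hα : 0 < α) (ha : 0 < a) (hκ : 0 < κ) :
    (∃ ψ : ℝ → ℝ,
      (∃ x : ℝ, 0 ≤ x ∧ ψ x ≠ 0) ∧
      ContinuousOn ψ (Set.Ici 0) ∧
      ψ 0 = 0 ∧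
      (∃ C : ℝ, ∀ x : ℝ, 0 ≤ x → |ψ x| ≤ C) ∧
      (∀ x : ℝ, 0 < x → x ≠ a →
        DifferentiableAt ℝ ψ x ∧ DifferentiableAt ℝ (deriv ψ) x ∧
        deriv (deriv ψ) x = κ ^ 2 * ψ x) ∧
      (∃ Lp Lm : ℝ,
        Tendsto (deriv ψ) (𝓝[>] a) (𝓝 Lp) ∧
        Tendsto (deriv ψ) (𝓝[<] a) (𝓝 Lm) ∧
        Lp - Lm = -α * ψ a))
    ↔ (1 < α * a ∧ (α / 2) * Real.exp (-2 * κ * a) = α / 2 - κ) := by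
  have hs0 : (0:ℝ) < Real.exp (κ * a) := Real.exp_pos _
  have ht0 : (0:ℝ) < Real.exp (-(κ * a)) := Real.exp_pos _
  have hst : Real.exp (κ * a) * Real.exp (-(κ * a)) = 1 := by
    rw [← Real.exp_add]; simp
  have ht2 : Real.exp (-2 * κ * a) = Real.exp (-(κ * a)) * Real.exp (-(κ * a)) := by
    rw [← Real.exp_add]; ring_nf
  constructor
  · rintro ⟨ψ, ⟨x₀, hx₀, hψx₀⟩, hcont, hψ0, ⟨C, hC⟩, hode, Lp, Lm, hLp, hLm, hjump⟩
    have hode₁ : ∀ x ∈ Set.Ioo (0:ℝ) a, DifferentiableAt ℝ ψ x ∧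
        DifferentiableAt ℝ (deriv ψ) x ∧ deriv (deriv ψ) x = κ ^ 2 * ψ x :=
      fun x hx => hode x hx.1 (ne_of_lt hx.2)
    have hode₂ : ∀ x ∈ Set.Ioi a, DifferentiableAt ℝ ψ x ∧
        DifferentiableAt ℝ (deriv ψ) x ∧ deriv (deriv ψ) x = κ ^ 2 * ψ x :=
      fun x hx => hode x (lt_trans ha hx) (ne_of_gt hx)
    obtain ⟨p₁, p₂, hp⟩ := ode_solution hκ isOpen_Ioo (convex_Ioo _ _) hode₁
    obtain ⟨q₁, q₂, hq⟩ := ode_solution hκ isOpen_Ioi (convex_Ioi _) hode₂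
    have hC0 : 0 ≤ C := le_trans (abs_nonneg _) (hC x₀ hx₀)
    -- q₁ = 0 by boundedness
    have hq₁ : q₁ = 0 := by
      by_contra hne
      have habs : 0 < |q₁| := abs_pos.mpr hne
      have hb : ∀ x, a < x → |q₁| * Real.exp (κ * x) ≤ C + |q₂| := by
        intro x hx
        have hx0 : (0:ℝ) < x := lt_trans ha hx
        have h1 : |ψ x| ≤ C := hC x (le_of_lt hx0)
        rw [(hq x hx).1] at h1
        have hF1 : Real.exp (-(κ * x)) ≤ 1 := Real.exp_le_one_iff.mpr (by nlinarith)
        have h2 : |q₁ * Real.exp (κ * x)| ≤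
            |q₁ * Real.exp (κ * x) + q₂ * Real.exp (-(κ * x))| + |q₂ * Real.exp (-(κ * x))| := by
          have := abs_add_le (q₁ * Real.exp (κ * x) + q₂ * Real.exp (-(κ * x)))
            (-(q₂ * Real.exp (-(κ * x))))
          simpa using this
        have h3 : |q₂ * Real.exp (-(κ * x))| ≤ |q₂| := by
          rw [abs_mul, abs_of_pos (Real.exp_pos _)]
          nlinarith [abs_nonneg q₂]
        calc |q₁| * Real.exp (κ * x) = |q₁ * Real.exp (κ * x)| := by
              rw [abs_mul, abs_of_pos (Real.exp_pos _)]
          _ ≤ _ + _ := h2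
          _ ≤ C + |q₂| := add_le_add h1 h3
      set M : ℝ := C + |q₂| with hM
      have hM1 : 0 < (M + 1) / |q₁| := by positivity
      set x : ℝ := max (a + 1) (Real.log ((M + 1) / |q₁|) / κ) with hxdef
      have hxa : a < x := lt_of_lt_of_le (lt_add_one a) (le_max_left _ _)
      have h3 : Real.log ((M + 1) / |q₁|) ≤ κ * x := by
        have h4 := le_max_right (a + 1) (Real.log ((M + 1) / |q₁|) / κ)
        rw [div_le_iff₀ hκ] at h4
        linarith [h4, mul_comm x κ]
      have h5 : (M + 1) / |q₁| ≤ Real.exp (κ * x) := by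
        rw [← Real.exp_log hM1]
        exact Real.exp_le_exp.mpr h3
      rw [div_le_iff₀ habs] at h5
      have h6 := hb x hxa
      nlinarith [abs_nonneg q₂]
    -- limit identities
    have hmem₁ : Set.Ioo (0:ℝ) a ∈ 𝓝[<] a := Ioo_mem_nhdsLT_of_mem ⟨ha, le_rfl⟩
    have hmem₀ : Set.Ioo (0:ℝ) a ∈ 𝓝[>] (0:ℝ) := Ioo_mem_nhdsGT_of_mem ⟨le_rfl, ha⟩
    have hmem₂ : Set.Ioi a ∈ 𝓝[>] a := self_mem_nhdsWithin
    have hca : ContinuousAt ψ a := hcont.continuousAt (Ici_mem_nhds ha)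
    have hgq : Continuous (fun x => q₁ * Real.exp (κ * x) + q₂ * Real.exp (-(κ * x))) := by
      fun_prop
    have hgp : Continuous (fun x => p₁ * Real.exp (κ * x) + p₂ * Real.exp (-(κ * x))) := by
      fun_prop
    have hgq' : Continuous (fun x => κ * q₁ * Real.exp (κ * x) - κ * q₂ * Real.exp (-(κ * x))) := by
      fun_prop
    have hgp' : Continuous (fun x => κ * p₁ * Real.exp (κ * x) - κ * p₂ * Real.exp (-(κ * x))) := by
      fun_prop
    have hψa_r : ψ a = q₁ * Real.exp (κ * a) + q₂ * Real.exp (-(κ * a)) := by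
      refine tendsto_nhds_unique
        (hca.tendsto.mono_left (nhdsWithin_le_nhds : 𝓝[>] a ≤ 𝓝 a)) ?_
      refine Tendsto.congr' ?_ ((hgq.tendsto a).mono_left nhdsWithin_le_nhds)
      filter_upwards [hmem₂] with y hy using ((hq y hy).1).symm
    have hψa_l : ψ a = p₁ * Real.exp (κ * a) + p₂ * Real.exp (-(κ * a)) := by
      refine tendsto_nhds_unique
        (hca.tendsto.mono_left (nhdsWithin_le_nhds : 𝓝[<] a ≤ 𝓝 a)) ?_
      refine Tendsto.congr' ?_ ((hgp.tendsto a).mono_left nhdsWithin_le_nhds)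
      filter_upwards [hmem₁] with y hy using ((hp y hy).1).symm
    have hψ00 : (0:ℝ) = p₁ + p₂ := by
      have t1 : Tendsto ψ (𝓝[>] (0:ℝ)) (𝓝 0) := by
        have := (hcont 0 Set.self_mem_Ici).tendsto
        rw [hψ0] at this
        exact this.mono_left (nhdsWithin_mono 0 Set.Ioi_subset_Ici_self)
      have t2 : Tendsto ψ (𝓝[>] (0:ℝ)) (𝓝 (p₁ + p₂)) := by
        have t3 := (hgp.tendsto 0).mono_left
          (nhdsWithin_le_nhds : 𝓝[>] (0:ℝ) ≤ 𝓝 0)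
        simp only [mul_zero, neg_zero, Real.exp_zero, mul_one] at t3
        refine Tendsto.congr' ?_ t3
        filter_upwards [hmem₀] with y hy using ((hp y hy).1).symm
      exact tendsto_nhds_unique t1 t2
    have hLp' : Lp = κ * q₁ * Real.exp (κ * a) - κ * q₂ * Real.exp (-(κ * a)) := by
      refine tendsto_nhds_unique hLp ?_
      refine Tendsto.congr' ?_ ((hgq'.tendsto a).mono_left nhdsWithin_le_nhds)
      filter_upwards [hmem₂] with y hy using ((hq y hy).2).symm
    have hLm' : Lm = κ * p₁ * Real.exp (κ * a) - κ * p₂ * Real.exp (-(κ * a)) := by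
      refine tendsto_nhds_unique hLm ?_
      refine Tendsto.congr' ?_ ((hgp'.tendsto a).mono_left nhdsWithin_le_nhds)
      filter_upwards [hmem₁] with y hy using ((hp y hy).2).symm
    have hp₂' : p₂ = -p₁ := by linarith
    -- p₁ ≠ 0
    have hA : p₁ ≠ 0 := by
      intro h0
      have hp₂0 : p₂ = 0 := by rw [hp₂', h0, neg_zero]
      have hψa0 : ψ a = 0 := by rw [hψa_l, h0, hp₂0]; ring
      have hq₂0 : q₂ = 0 := by
        rw [hψa_r, hq₁] at hψa0
        simp only [zero_mul, zero_add] at hψa0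
        exact (mul_eq_zero.mp hψa0).resolve_right (ne_of_gt ht0)
      apply hψx₀
      rcases eq_or_lt_of_le hx₀ with h | h
      · rw [← h]; exact hψ0
      · rcases lt_trichotomy x₀ a with h1 | h1 | h1
        · rw [(hp x₀ ⟨h, h1⟩).1, h0, hp₂0]; ring
        · rw [h1]; exact hψa0
        · rw [(hq x₀ h1).1, hq₁, hq₂0]; ring
    -- main equation
    have hQ : q₂ * Real.exp (-(κ * a)) =
        p₁ * Real.exp (κ * a) - p₁ * Real.exp (-(κ * a)) := by
      linear_combination hψa_l - hψa_r + Real.exp (-(κ * a)) * hp₂' -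
        Real.exp (κ * a) * hq₁
    have hkey : p₁ * (2 * κ * Real.exp (κ * a)) =
        p₁ * (α * (Real.exp (κ * a) - Real.exp (-(κ * a)))) := by
      rw [hLp', hLm', hψa_l, hp₂', hq₁] at hjump
      linear_combination -hjump - κ * hQ
    have key2 : 2 * κ * Real.exp (κ * a) =
        α * (Real.exp (κ * a) - Real.exp (-(κ * a))) := mul_left_cancel₀ hA hkey
    have h2κ : 2 * κ = α * (1 - Real.exp (-(κ * a)) * Real.exp (-(κ * a))) := by
      linear_combination Real.exp (-(κ * a)) * key2 + (α - 2 * κ) * hst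
    constructor
    · have hne : -(2 * κ * a) ≠ 0 := by nlinarith
      have hexp := Real.add_one_lt_exp hne
      have he2 : Real.exp (-(2 * κ * a)) =
          Real.exp (-(κ * a)) * Real.exp (-(κ * a)) := by
        rw [show -(2 * κ * a) = -2 * κ * a by ring, ht2]
      rw [he2] at hexp
      nlinarith [Real.exp_pos (-(κ * a))]
    · rw [ht2]
      linear_combination (Real.exp (-(κ * a)) / 2) * key2 + (α / 2 - κ) * hst
  · rintro ⟨hgt, heq⟩
    -- κ·e^{κa}·2 = α(e^{κa} - e^{-κa})
    have key : 2 * κ * Real.exp (κ * a) =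
        α * (Real.exp (κ * a) - Real.exp (-(κ * a))) := by
      have h2 : (α / 2) * (Real.exp (-(κ * a)) * Real.exp (-(κ * a))) = α / 2 - κ := by
        rw [← ht2]; exact heq
      linear_combination 2 * Real.exp (κ * a) * h2 - α * Real.exp (-(κ * a)) * hst
    set B : ℝ := Real.exp (2 * κ * a) - 1 with hB
    have hB2 : B * Real.exp (-(κ * a)) = Real.exp (κ * a) - Real.exp (-(κ * a)) := by
      have : Real.exp (2 * κ * a) = Real.exp (κ * a) * Real.exp (κ * a) := by
        rw [← Real.exp_add]; ring_nf
      rw [hB, this]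
      linear_combination Real.exp (κ * a) * hst
    set f₁ : ℝ → ℝ := fun x => Real.exp (κ * x) - Real.exp (-(κ * x)) with hf₁
    set f₂ : ℝ → ℝ := fun x => B * Real.exp (-(κ * x)) with hf₂
    set ψ : ℝ → ℝ := fun x => if x ≤ a then f₁ x else f₂ x with hψ
    have hψ_le : ∀ x : ℝ, x ≤ a → ψ x = f₁ x := fun x hx => if_pos hx
    have hψ_gt : ∀ x : ℝ, a < x → ψ x = f₂ x := fun x hx => if_neg (not_le.mpr hx)
    have hexp1 : ∀ y : ℝ, HasDerivAt (fun x => Real.exp (κ * x)) (κ * Real.exp (κ * y)) y := by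
      intro y
      have := (((hasDerivAt_id y).const_mul κ)).exp
      simp only [id_eq] at this
      convert this using 1; ring
    have hexp2 : ∀ y : ℝ,
        HasDerivAt (fun x => Real.exp (-(κ * x))) (-κ * Real.exp (-(κ * y))) y := by
      intro y
      have := (((hasDerivAt_id y).const_mul κ).neg).exp
      simp only [id_eq, Pi.neg_apply] at this
      convert this using 1; ring
    have hd₁ : ∀ y : ℝ, HasDerivAt f₁ (κ * Real.exp (κ * y) + κ * Real.exp (-(κ * y))) y := by
      intro y
      have := (hexp1 y).sub (hexp2 y)
      exact this.congr_deriv (by ring)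
    have hd₁' : ∀ y : ℝ, HasDerivAt (fun y => κ * Real.exp (κ * y) + κ * Real.exp (-(κ * y)))
        (κ ^ 2 * f₁ y) y := by
      intro y
      have := ((hexp1 y).const_mul κ).add ((hexp2 y).const_mul κ)
      exact this.congr_deriv (by simp only [hf₁]; ring)
    have hd₂ : ∀ y : ℝ, HasDerivAt f₂ (-(κ * B * Real.exp (-(κ * y)))) y := by
      intro y
      have := (hexp2 y).const_mul B
      exact this.congr_deriv (by ring)
    have hd₂' : ∀ y : ℝ, HasDerivAt (fun y => -(κ * B * Real.exp (-(κ * y))))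
        (κ ^ 2 * f₂ y) y := by
      intro y
      have := ((hexp2 y).const_mul (κ * B)).neg
      exact this.congr_deriv (by simp only [hf₂]; ring)
    have hp₁ := hd_piece isOpen_Iio (fun y hy => hψ_le y (le_of_lt hy)) hd₁ hd₁'
    have hp₂ := hd_piece isOpen_Ioi (fun y hy => hψ_gt y hy) hd₂ hd₂'
    refine ⟨ψ, ⟨a, le_of_lt ha, ?_⟩, ?_, ?_, ⟨Real.exp (κ * a), ?_⟩, ?_, ?_⟩
    · rw [hψ_le a le_rfl]
      simp only [hf₁]
      have : Real.exp (-(κ * a)) < Real.exp (κ * a) := by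
        apply Real.exp_lt_exp.mpr; nlinarith
      intro h; nlinarith [h]
    · apply Continuous.continuousOn
      apply Continuous.if_le _ _ continuous_id continuous_const
      · intro x hx
        simp only [id_eq] at hx
        subst hx
        simp only [hf₁, hf₂]
        linarith [hB2]
      · fun_prop
      · fun_prop
    · rw [hψ_le 0 (le_of_lt ha)]; simp [hf₁]
    · intro x hx
      rcases le_or_gt x a with h | h
      · rw [hψ_le x h]
        simp only [hf₁]
        have h1 : Real.exp (-(κ * x)) ≤ Real.exp (κ * x) := by
          apply Real.exp_le_exp.mpr; nlinarith
        have h2 : Real.exp (κ * x) ≤ Real.exp (κ * a) := by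
          apply Real.exp_le_exp.mpr; nlinarith
        rw [abs_of_nonneg (by linarith)]
        have := Real.exp_pos (-(κ * x))
        linarith
      · rw [hψ_gt x h]
        simp only [hf₂]
        have hB0 : 0 < B := by
          rw [hB]
          have : (1:ℝ) < Real.exp (2 * κ * a) := by
            rw [Real.one_lt_exp_iff]; nlinarith
          linarith
        have h2 : Real.exp (-(κ * x)) ≤ Real.exp (-(κ * a)) := by
          apply Real.exp_le_exp.mpr; nlinarith
        rw [abs_of_nonneg (by positivity)]
        nlinarith [Real.exp_pos (-(κ * x)), Real.exp_pos (-(κ * a))]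
    · intro x hx hxa
      rcases lt_or_gt_of_ne hxa with h | h
      · exact ⟨(hp₁ x h).1, (hp₁ x h).2.1, by
          rw [(hp₁ x h).2.2.1, hψ_le x (le_of_lt h)]⟩
      · exact ⟨(hp₂ x h).1, (hp₂ x h).2.1, by
          rw [(hp₂ x h).2.2.1, hψ_gt x h]⟩
    · refine ⟨-(κ * B * Real.exp (-(κ * a))),
        κ * Real.exp (κ * a) + κ * Real.exp (-(κ * a)), ?_, ?_, ?_⟩
      · have hcont : Continuous (fun y => -(κ * B * Real.exp (-(κ * y)))) := by fun_prop
        refine Tendsto.congr' ?_ ((hcont.tendsto a).mono_left nhdsWithin_le_nhds)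
        filter_upwards [self_mem_nhdsWithin] with y hy
        exact ((hp₂ y hy).2.2.2).symm
      · have hcont : Continuous (fun y => κ * Real.exp (κ * y) + κ * Real.exp (-(κ * y))) := by
          fun_prop
        refine Tendsto.congr' ?_ ((hcont.tendsto a).mono_left nhdsWithin_le_nhds)
        filter_upwards [self_mem_nhdsWithin] with y hy
        exact ((hp₁ y hy).2.2.2).symm
      · rw [hψ_le a le_rfl]
        simp only [hf₁]
        linear_combination -κ * hB2 - key
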